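/- Let A_t = (Q_t, δ_t, i_t, o_t) be a Set automaton for a functor F with free monad T, and let S ⊆ TI with inclusion j, and E ⊆ T(I+1). With α_S the restricted reachability map and β_E(q) = o_t ∘ [i_t, 1_q]^♯ restricted to E, the table entry satisfies (β_E ∘ α_S)(s) = L_{A_t} ∘ μ_I ∘ T[η_I, 1_s] (as a function E → O), where L_{A_t} = o_t ∘ i_t^♯ : TI → O. -/

import Mathlib

open CategoryTheory

universe u

/-- Computing observation-table entries of a contextual wrapper: for a `Set` automaton
`(Q_t, δ_t, i_t, o_t)` over `F` with free `F`-algebra monad `T`, reachability map `reach = i_t^♯`,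
context maps `sh q = [i_t, 1_q]^♯` and wrapper maps `α_S(s) = reach(s)`,
`β_E(q)(e) = o_t(sh q e)`, the table entry satisfies
`(β_E ∘ α_S)(s)(e) = (L_{A_t} ∘ μ_I ∘ T[η_I, 1_s])(e)` where `L_{A_t} = o_t ∘ i_t^♯`. -/
theorem stmt10 (F : Type u ⥤ Type u) (T : CategoryTheory.Monad (Type u))
    (γ : ∀ X : Type u, F.obj (T.obj X) → T.obj X)
    (hγnat : ∀ (X Y : Type u) (f : X → Y) (b : F.obj (T.obj X)),
      γ Y (F.map (T.map (TypeCat.ofHom f)) b) = T.map (TypeCat.ofHom f) (γ X b))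
    (hγμ : ∀ (X : Type u) (b : F.obj (T.obj (T.obj X))),
      T.μ.app X (γ (T.obj X) b) = γ X (F.map (T.μ.app X) b))
    (hfree : ∀ (X Z : Type u) (z : F.obj Z → Z) (f : X → Z),
      ∃! g : T.obj X → Z,
        (∀ a, g (T.η.app X a) = f a) ∧ (∀ b, g (γ X b) = z (F.map (TypeCat.ofHom g) b)))
    (I O Qt : Type u)
    (δt : F.obj Qt → Qt) (it : I → Qt) (ot : Qt → O)
    -- the reachability map `i_t^♯`
    (reach : T.obj I → Qt)
    (hreach1 : ∀ a, reach (T.η.app I a) = it a)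
    (hreach2 : ∀ b, reach (γ I b) = δt (F.map (TypeCat.ofHom reach) b))
    -- the extensions `[i_t, 1_q]^♯ : T(I + 1) → Q_t`
    (sh : Qt → T.obj (I ⊕ PUnit.{u + 1}) → Qt)
    (hsh1 : ∀ q a, sh q (T.η.app (I ⊕ PUnit.{u + 1}) a) = Sum.elim it (fun _ => q) a)
    (hsh2 : ∀ q b, sh q (γ (I ⊕ PUnit.{u + 1}) b) = δt (F.map (TypeCat.ofHom (sh q)) b))
    (S : Set (T.obj I)) (E : Set (T.obj (I ⊕ PUnit.{u + 1}))) :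
    ∀ (s : S) (e : E),
      ot (sh (reach (s : T.obj I)) (e : T.obj (I ⊕ PUnit.{u + 1}))) =
        ot (reach (T.μ.app I
          (T.map (TypeCat.ofHom (Sum.elim (T.η.app I) (fun _ : PUnit.{u + 1} => (s : T.obj I))))
            (e : T.obj (I ⊕ PUnit.{u + 1}))))) := by
  intro s e
  set f : (I ⊕ PUnit.{u + 1}) → T.obj I :=
    Sum.elim (T.η.app I) (fun _ => (s : T.obj I)) with hf
  have key : sh (reach (s : T.obj I)) =
      fun x => reach (T.μ.app I (T.map (TypeCat.ofHom f) x)) := by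
    obtain ⟨g, -, huniq⟩ :=
      hfree (I ⊕ PUnit.{u + 1}) Qt δt (Sum.elim it (fun _ => reach (s : T.obj I)))
    have h1 : sh (reach (s : T.obj I)) = g :=
      huniq _ ⟨hsh1 _, hsh2 _⟩
    have h2 : (fun x => reach (T.μ.app I (T.map (TypeCat.ofHom f) x))) = g := by
      apply huniq
      constructor
      · intro a
        have hnat : T.map (TypeCat.ofHom f) (T.η.app (I ⊕ PUnit.{u + 1}) a) = T.η.app (T.obj I) (f a) := by
          have := ConcreteCategory.congr_hom (T.η.naturality (X := I ⊕ PUnit.{u + 1}) (Y := T.obj I) (TypeCat.ofHom f)) a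
          simpa [types_comp] using this.symm
        have hmu : T.μ.app I (T.η.app (T.obj I) (f a)) = f a := by
          have := ConcreteCategory.congr_hom (T.left_unit I) (f a)
          exact this
        cases a with
        | inl i => rw [hnat, hmu]; simp [hf, hreach1]
        | inr u => rw [hnat, hmu]; rfl
      · intro b
        have step1 : T.map (TypeCat.ofHom f) (γ (I ⊕ PUnit.{u + 1}) b) =
            γ (T.obj I) (F.map (T.map (TypeCat.ofHom f)) b) := (hγnat _ _ f b).symm
        have step2 : T.μ.app I (γ (T.obj I) (F.map (T.map (TypeCat.ofHom f)) b)) =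
            γ I (F.map (T.μ.app I) (F.map (T.map (TypeCat.ofHom f)) b)) := hγμ _ _
        have fcomp : ∀ {A B C : Type u} (p : A ⟶ B) (q : B ⟶ C) (x : F.obj A),
            F.map q (F.map p x) = F.map (p ≫ q) x := by
          intro A B C p q x
          exact (ConcreteCategory.congr_hom (F.map_comp p q) x).symm
        simp only [step1, step2, hreach2, fcomp]
        rfl
    rw [h1, h2]
  rw [congrFun key (e : T.obj (I ⊕ PUnit.{u + 1}))]
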